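/- Let F be a field of characteristic zero and let A ∈ U₃(F) be an idempotent matrix (A² = A) of rank 1. Then there exists a map φ : U₃(F) → U₃(F) which is either an algebra automorphism of U₃(F) or an antiautomorphism of U₃(F) (an F-linear bijection with φ(XY) = φ(Y)φ(X) for all X, Y) such that φ(A) = e₁₁ or φ(A) = e₂₂. -/

import Mathlib

set_option synthInstance.maxHeartbeats 1000000
set_option maxHeartbeats 1000000

/-- The algebra of 3×3 upper-triangular matrices over `F`. -/
def UT3 (F : Type*) [Field F] : Subalgebra F (Matrix (Fin 3) (Fin 3) F) where
  carrier := {M | ∀ i j : Fin 3, j < i → M i j = 0}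
  mul_mem' := by
    intro A B hA hB i j hij
    show (A * B) i j = 0
    rw [Matrix.mul_apply]
    refine Finset.sum_eq_zero fun k _ => ?_
    rcases lt_or_ge k i with hk | hk
    · rw [hA i k hk, zero_mul]
    · rw [hB k j (lt_of_lt_of_le hij hk), mul_zero]
  one_mem' := by
    intro i j hij
    exact Matrix.one_apply_ne (fun h => absurd hij (by rw [h]; exact lt_irrefl j))
  add_mem' := by
    intro A B hA hB i j hij
    show A i j + B i j = 0
    rw [hA i j hij, hB i j hij, add_zero]
  zero_mem' := fun i j _ => rfl
  algebraMap_mem' := by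
    intro r i j hij
    show algebraMap F (Matrix (Fin 3) (Fin 3) F) r i j = 0
    rw [Matrix.algebraMap_eq_diagonal]
    exact Matrix.diagonal_apply_ne _ (fun h => absurd hij (by rw [h]; exact lt_irrefl j))

/-- The matrix unit `e_{ij}` as an element of `UT3 F`, for `i ≤ j`. -/
def eU {F : Type*} [Field F] (i j : Fin 3) (h : i ≤ j) : UT3 F :=
  ⟨Matrix.single i j 1, by
    intro a b hba
    by_cases hia : i = a
    · by_cases hjb : j = b
      · exact absurd hba (by rw [← hia, ← hjb]; exact not_lt.mpr h)
      · exact Matrix.single_apply_of_ne _ _ _ _ _ (by tauto)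
    · exact Matrix.single_apply_of_ne _ _ _ _ _ (by tauto)⟩

/-- A Rota–Baxter operator of weight zero: an `F`-linear map `R` with
`R(x)R(y) = R(R(x)y + xR(y))` for all `x, y`. -/
def IsRotaBaxterW0 {F : Type*} [Field F] {A : Type*} [Ring A] [Algebra F A]
    (R : A →ₗ[F] A) : Prop :=
  ∀ x y : A, R x * R y = R (R x * y + x * R y)

section Helpers

/-- Conjugation by a unit as an algebra equivalence. -/
def conjAE {F A : Type*} [CommSemiring F] [Ring A] [Algebra F A] (u : Aˣ) : A ≃ₐ[F] A where
  toFun x := ↑u⁻¹ * x * ↑u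
  invFun x := ↑u * x * ↑u⁻¹
  left_inv x := by simp [mul_assoc]
  right_inv x := by simp [mul_assoc]
  map_mul' x y := by
    show (↑u⁻¹ : A) * (x * y) * ↑u = (↑u⁻¹ * x * ↑u) * (↑u⁻¹ * y * ↑u)
    simp [mul_assoc]
  map_add' x y := by
    show (↑u⁻¹ : A) * (x + y) * ↑u = _
    rw [mul_add, add_mul]
  commutes' r := by
    show (↑u⁻¹ : A) * algebraMap F A r * ↑u = _
    rw [mul_assoc, Algebra.commutes r (↑u : A), ← mul_assoc, Units.inv_mul, one_mul]

@[simp] lemma conjAE_apply {F A : Type*} [CommSemiring F] [Ring A] [Algebra F A] (u : Aˣ)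
    (x : A) : conjAE (F := F) u x = ↑u⁻¹ * x * ↑u := rfl

lemma rank_ge_two {F : Type*} [Field F] (M : Matrix (Fin 3) (Fin 3) F) (i j : Fin 3)
    (hne : i ≠ j) (hii : M i i = 1) (hjj : M j j = 1) (hji : M j i = 0) :
    2 ≤ M.rank := by
  classical
  set W := LinearMap.range M.mulVecLin with hW
  have hv : M.mulVec (Pi.single i 1) ∈ W := ⟨Pi.single i 1, rfl⟩
  have hw : M.mulVec (Pi.single j 1) ∈ W := ⟨Pi.single j 1, rfl⟩
  have li : LinearIndependent F ![(⟨_, hv⟩ : W), ⟨_, hw⟩] := by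
    apply LinearIndependent.of_comp W.subtype
    have : (W.subtype ∘ ![(⟨_, hv⟩ : W), ⟨_, hw⟩]) =
        ![M.mulVec (Pi.single i 1), M.mulVec (Pi.single j 1)] := by
      funext k; fin_cases k <;> rfl
    rw [this, LinearIndependent.pair_iff]
    intro s t hst
    have h1 := congrFun hst i
    have h2 := congrFun hst j
    simp [hii, hjj, hji] at h1 h2
    rw [h2, zero_mul, add_zero] at h1
    exact ⟨h1, h2⟩
  have := li.fintype_card_le_finrank
  simpa [Matrix.rank] using this

lemma idem_scalar {F : Type*} [Field F] {d : F} (h : d * d = d) : d = 0 ∨ d = 1 := by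
  have h' : d * (d - 1) = 0 := by ring_nf; linear_combination h
  rcases mul_eq_zero.mp h' with h0 | h1
  · exact Or.inl h0
  · exact Or.inr (sub_eq_zero.mp h1)

namespace myUT3
variable {F : Type*} [Field F]

/-- Build an element of `UT3 F` from vanishing of the three lower entries. -/
def mkUT (M : Matrix (Fin 3) (Fin 3) F) (h10 : M 1 0 = 0) (h20 : M 2 0 = 0)
    (h21 : M 2 1 = 0) : UT3 F :=
  ⟨M, by intro i j h; fin_cases i <;> fin_cases j <;>
      first | exact absurd h (by decide) | assumption⟩

@[simp] lemma mkUT_coe (M : Matrix (Fin 3) (Fin 3) F) (h10 h20 h21) :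
    ((mkUT M h10 h20 h21 : UT3 F) : Matrix (Fin 3) (Fin 3) F) = M := rfl

/-- antidiagonal flip on indices -/
def fl : Fin 3 → Fin 3 := ![2, 1, 0]

lemma fl_lt {i j : Fin 3} (h : j < i) : fl i < fl j := by revert h; revert i j; decide

/-- The antidiagonal flip antiautomorphism on `UT3`. -/
def omU (X : UT3 F) : UT3 F :=
  ⟨Matrix.of fun i j => (X : Matrix (Fin 3) (Fin 3) F) (fl j) (fl i), by
    intro i j hij
    exact X.2 _ _ (fl_lt hij)⟩

@[simp] lemma omU_coe (X : UT3 F) (i j : Fin 3) :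
    (omU X : Matrix (Fin 3) (Fin 3) F) i j
      = (X : Matrix (Fin 3) (Fin 3) F) (fl j) (fl i) := rfl

lemma omU_invol (X : UT3 F) : omU (omU X) = X := by
  apply Subtype.ext
  ext i j
  show (X : Matrix (Fin 3) (Fin 3) F) (fl (fl i)) (fl (fl j)) = _
  have h : ∀ k : Fin 3, fl (fl k) = k := by decide
  rw [h, h]

lemma omU_bij : Function.Bijective (omU (F := F)) :=
  Function.Involutive.bijective omU_invol

lemma omU_add (X Y : UT3 F) : omU (X + Y) = omU X + omU Y := by
  apply Subtype.ext; ext i j; simp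

lemma omU_smul (c : F) (X : UT3 F) : omU (c • X) = c • omU X := by
  apply Subtype.ext; ext i j; simp

lemma omU_mul (X Y : UT3 F) : omU (X * Y) = omU Y * omU X := by
  apply Subtype.ext
  ext i j
  show ((X : Matrix (Fin 3) (Fin 3) F) * (Y : Matrix (Fin 3) (Fin 3) F)) (fl j) (fl i) = _
  fin_cases i <;> fin_cases j <;>
    simp [Matrix.mul_apply, Fin.sum_univ_three, fl] <;> ring

end myUT3

end Helpers

open myUT3 in
/-- **Lemma 5(a).** Every rank-one idempotent of `U₃(F)` is mapped to `e₁₁` or `e₂₂` by some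
automorphism or antiautomorphism of `U₃(F)`. -/
theorem idem_rank_one_conj (F : Type*) [Field F] [CharZero F]
    (A : UT3 F) (hidem : A * A = A)
    (hrank : (A : Matrix (Fin 3) (Fin 3) F).rank = 1) :
    ∃ φ : UT3 F → UT3 F,
      ((∃ ψ : UT3 F ≃ₐ[F] UT3 F, φ = ⇑ψ) ∨
        (Function.Bijective φ ∧
          (∀ X Y : UT3 F, φ (X + Y) = φ X + φ Y) ∧
          (∀ (c : F) (X : UT3 F), φ (c • X) = c • φ X) ∧
          (∀ X Y : UT3 F, φ (X * Y) = φ Y * φ X))) ∧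
      (φ A = eU 0 0 (by decide) ∨ φ A = eU 1 1 (by decide)) := by
  classical
  set M : Matrix (Fin 3) (Fin 3) F := (A : Matrix (Fin 3) (Fin 3) F) with hMdef
  have hMM : M * M = M := by
    have := congrArg Subtype.val hidem
    simpa using this
  have hlow : ∀ i j : Fin 3, j < i → M i j = 0 := A.2
  have h10 : M 1 0 = 0 := hlow 1 0 (by decide)
  have h20 : M 2 0 = 0 := hlow 2 0 (by decide)
  have h21 : M 2 1 = 0 := hlow 2 1 (by decide)
  have e00 := congrFun (congrFun hMM 0) 0
  have e01 := congrFun (congrFun hMM 0) 1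
  have e02 := congrFun (congrFun hMM 0) 2
  have e11 := congrFun (congrFun hMM 1) 1
  have e12 := congrFun (congrFun hMM 1) 2
  have e22 := congrFun (congrFun hMM 2) 2
  rw [Matrix.mul_apply, Fin.sum_univ_three] at e00 e01 e02 e11 e12 e22
  simp only [h10, h20, h21, mul_zero, zero_mul, add_zero, zero_add] at e00 e01 e02 e11 e12 e22
  
  rcases idem_scalar e00 with hd0 | hd0 <;> rcases idem_scalar e11 with hd1 | hd1 <;>
    rcases idem_scalar e22 with hd2 | hd2
  -- (0,0,0)
  · exfalso
    have h01 : M 0 1 = 0 := by linear_combination (-1 : F) * e01 + M 0 1 * hd0 + M 0 1 * hd1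
    have h12 : M 1 2 = 0 := by linear_combination (-1 : F) * e12 + M 1 2 * hd1 + M 1 2 * hd2
    have h02 : M 0 2 = 0 := by
      linear_combination (-1 : F) * e02 + M 0 2 * hd0 + M 0 2 * hd2 + M 1 2 * h01
    have hM0 : M = 0 := by
      ext i j
      fin_cases i <;> fin_cases j <;>
        simp [Matrix.vecHead, Matrix.vecTail, h01, h02, h12, hd0, hd1, hd2, h10, h20, h21]
    rw [hM0, Matrix.rank_zero] at hrank
    exact absurd hrank (by norm_num)
  -- (0,0,1) : antiautomorphism case, A ↦ e₃₃ ↦ e₁₁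
  · have h01 : M 0 1 = 0 := by linear_combination (-1 : F) * e01 + M 0 1 * hd0 + M 0 1 * hd1
    have hM3 : M = !![0, 0, M 0 2; 0, 0, M 1 2; 0, 0, 1] := by
      ext i j
      fin_cases i <;> fin_cases j <;> simp [Matrix.vecHead, Matrix.vecTail, hd0, hd1, hd2, h01, h10, h20, h21]
    set S : UT3 F := mkUT !![1, 0, M 0 2; 0, 1, M 1 2; 0, 0, 1]
      (by simp [Matrix.vecHead, Matrix.vecTail]) (by simp [Matrix.vecHead, Matrix.vecTail]) (by simp [Matrix.vecHead, Matrix.vecTail]) with hS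
    set T : UT3 F := mkUT !![1, 0, -(M 0 2); 0, 1, -(M 1 2); 0, 0, 1]
      (by simp [Matrix.vecHead, Matrix.vecTail]) (by simp [Matrix.vecHead, Matrix.vecTail]) (by simp [Matrix.vecHead, Matrix.vecTail]) with hT
    have hST : S * T = 1 := by
      apply Subtype.ext
      show (!![1, 0, M 0 2; 0, 1, M 1 2; 0, 0, 1] *
        !![1, 0, -(M 0 2); 0, 1, -(M 1 2); 0, 0, 1] : Matrix (Fin 3) (Fin 3) F) = 1
      ext i j
      fin_cases i <;> fin_cases j <;>
        simp [Matrix.vecHead, Matrix.vecTail, Matrix.mul_apply, Fin.sum_univ_three, Matrix.one_apply]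
    have hTS : T * S = 1 := by
      apply Subtype.ext
      show (!![1, 0, -(M 0 2); 0, 1, -(M 1 2); 0, 0, 1] *
        !![1, 0, M 0 2; 0, 1, M 1 2; 0, 0, 1] : Matrix (Fin 3) (Fin 3) F) = 1
      ext i j
      fin_cases i <;> fin_cases j <;>
        simp [Matrix.vecHead, Matrix.vecTail, Matrix.mul_apply, Fin.sum_univ_three, Matrix.one_apply]
    set u : (UT3 F)ˣ := ⟨S, T, hST, hTS⟩ with hu
    have key : ((conjAE (F := F) u A : UT3 F) : Matrix (Fin 3) (Fin 3) F)
        = Matrix.single 2 2 1 := by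
      have hval : ((conjAE (F := F) u A : UT3 F) : Matrix (Fin 3) (Fin 3) F)
          = (T : Matrix (Fin 3) (Fin 3) F) * M * (S : Matrix (Fin 3) (Fin 3) F) := rfl
      rw [hval, hM3, hS, hT, mkUT_coe, mkUT_coe]
      ext i j
      fin_cases i <;> fin_cases j <;>
        simp [Matrix.vecHead, Matrix.vecTail, Matrix.mul_apply, Fin.sum_univ_three, Matrix.single] <;> ring
    refine ⟨fun X => omU (conjAE (F := F) u X), Or.inr ⟨?_, ?_, ?_, ?_⟩, Or.inl ?_⟩
    · exact omU_bij.comp (conjAE (F := F) u).bijective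
    · intro X Y
      show omU (conjAE (F := F) u (X + Y)) = omU (conjAE (F := F) u X) + omU (conjAE (F := F) u Y)
      rw [map_add, omU_add]
    · intro c X
      show omU (conjAE (F := F) u (c • X)) = c • omU (conjAE (F := F) u X)
      rw [map_smul, omU_smul]
    · intro X Y
      show omU (conjAE (F := F) u (X * Y)) = omU (conjAE (F := F) u Y) * omU (conjAE (F := F) u X)
      rw [map_mul, omU_mul]
    · apply Subtype.ext
      ext i j
      rw [omU_coe, key]
      fin_cases i <;> fin_cases j <;> simp [Matrix.vecHead, Matrix.vecTail, fl, eU, Matrix.single]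
  -- (0,1,0) : automorphism case, A ↦ e₂₂
  · have h02 : M 0 2 = M 0 1 * M 1 2 := by
      linear_combination (-1 : F) * e02 + M 0 2 * hd0 + M 0 2 * hd2
    have hM2 : M = !![0, M 0 1, M 0 1 * M 1 2; 0, 1, M 1 2; 0, 0, 0] := by
      ext i j
      fin_cases i <;> fin_cases j <;> simp [Matrix.vecHead, Matrix.vecTail, hd0, hd1, hd2, h02, h10, h20, h21]
    set S : UT3 F := mkUT !![1, M 0 1, 0; 0, 1, -(M 1 2); 0, 0, 1]
      (by simp [Matrix.vecHead, Matrix.vecTail]) (by simp [Matrix.vecHead, Matrix.vecTail]) (by simp [Matrix.vecHead, Matrix.vecTail]) with hS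
    set T : UT3 F := mkUT !![1, -(M 0 1), -(M 0 1 * M 1 2); 0, 1, M 1 2; 0, 0, 1]
      (by simp [Matrix.vecHead, Matrix.vecTail]) (by simp [Matrix.vecHead, Matrix.vecTail]) (by simp [Matrix.vecHead, Matrix.vecTail]) with hT
    have hST : S * T = 1 := by
      apply Subtype.ext
      show (!![1, M 0 1, 0; 0, 1, -(M 1 2); 0, 0, 1] *
        !![1, -(M 0 1), -(M 0 1 * M 1 2); 0, 1, M 1 2; 0, 0, 1] : Matrix (Fin 3) (Fin 3) F) = 1
      ext i j
      fin_cases i <;> fin_cases j <;>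
        simp [Matrix.vecHead, Matrix.vecTail, Matrix.mul_apply, Fin.sum_univ_three, Matrix.one_apply] <;> ring
    have hTS : T * S = 1 := by
      apply Subtype.ext
      show (!![1, -(M 0 1), -(M 0 1 * M 1 2); 0, 1, M 1 2; 0, 0, 1] *
        !![1, M 0 1, 0; 0, 1, -(M 1 2); 0, 0, 1] : Matrix (Fin 3) (Fin 3) F) = 1
      ext i j
      fin_cases i <;> fin_cases j <;>
        simp [Matrix.vecHead, Matrix.vecTail, Matrix.mul_apply, Fin.sum_univ_three, Matrix.one_apply] <;> ring
    set u : (UT3 F)ˣ := ⟨S, T, hST, hTS⟩ with hu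
    refine ⟨⇑(conjAE (F := F) u), Or.inl ⟨conjAE (F := F) u, rfl⟩, Or.inr ?_⟩
    apply Subtype.ext
    have hval : ((conjAE (F := F) u A : UT3 F) : Matrix (Fin 3) (Fin 3) F)
        = (T : Matrix (Fin 3) (Fin 3) F) * M * (S : Matrix (Fin 3) (Fin 3) F) := rfl
    rw [hval, hM2, hS, hT, mkUT_coe, mkUT_coe]
    show _ = Matrix.single 1 1 (1 : F)
    ext i j
    fin_cases i <;> fin_cases j <;>
      simp [Matrix.vecHead, Matrix.vecTail, Matrix.mul_apply, Fin.sum_univ_three, Matrix.single] <;> ring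
  -- (0,1,1) : rank ≥ 2
  · exfalso
    have h2 := rank_ge_two M 1 2 (by decide) hd1 hd2 h21
    rw [hrank] at h2; omega
  -- (1,0,0) : automorphism case, A ↦ e₁₁
  · have h12z : M 1 2 = 0 := by linear_combination (-1 : F) * e12 + M 1 2 * hd1 + M 1 2 * hd2
    have hM1 : M = !![1, M 0 1, M 0 2; 0, 0, 0; 0, 0, 0] := by
      ext i j
      fin_cases i <;> fin_cases j <;> simp [Matrix.vecHead, Matrix.vecTail, hd0, hd1, hd2, h12z, h10, h20, h21]
    set S : UT3 F := mkUT !![1, -(M 0 1), -(M 0 2); 0, 1, 0; 0, 0, 1]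
      (by simp [Matrix.vecHead, Matrix.vecTail]) (by simp [Matrix.vecHead, Matrix.vecTail]) (by simp [Matrix.vecHead, Matrix.vecTail]) with hS
    set T : UT3 F := mkUT !![1, M 0 1, M 0 2; 0, 1, 0; 0, 0, 1]
      (by simp [Matrix.vecHead, Matrix.vecTail]) (by simp [Matrix.vecHead, Matrix.vecTail]) (by simp [Matrix.vecHead, Matrix.vecTail]) with hT
    have hST : S * T = 1 := by
      apply Subtype.ext
      show (!![1, -(M 0 1), -(M 0 2); 0, 1, 0; 0, 0, 1] *
        !![1, M 0 1, M 0 2; 0, 1, 0; 0, 0, 1] : Matrix (Fin 3) (Fin 3) F) = 1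
      ext i j
      fin_cases i <;> fin_cases j <;>
        simp [Matrix.vecHead, Matrix.vecTail, Matrix.mul_apply, Fin.sum_univ_three, Matrix.one_apply]
    have hTS : T * S = 1 := by
      apply Subtype.ext
      show (!![1, M 0 1, M 0 2; 0, 1, 0; 0, 0, 1] *
        !![1, -(M 0 1), -(M 0 2); 0, 1, 0; 0, 0, 1] : Matrix (Fin 3) (Fin 3) F) = 1
      ext i j
      fin_cases i <;> fin_cases j <;>
        simp [Matrix.vecHead, Matrix.vecTail, Matrix.mul_apply, Fin.sum_univ_three, Matrix.one_apply]
    set u : (UT3 F)ˣ := ⟨S, T, hST, hTS⟩ with hu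
    refine ⟨⇑(conjAE (F := F) u), Or.inl ⟨conjAE (F := F) u, rfl⟩, Or.inl ?_⟩
    apply Subtype.ext
    have hval : ((conjAE (F := F) u A : UT3 F) : Matrix (Fin 3) (Fin 3) F)
        = (T : Matrix (Fin 3) (Fin 3) F) * M * (S : Matrix (Fin 3) (Fin 3) F) := rfl
    rw [hval, hM1, hS, hT, mkUT_coe, mkUT_coe]
    show _ = Matrix.single 0 0 (1 : F)
    ext i j
    fin_cases i <;> fin_cases j <;>
      simp [Matrix.vecHead, Matrix.vecTail, Matrix.mul_apply, Fin.sum_univ_three, Matrix.single] <;> ring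
  -- (1,0,1) : rank ≥ 2
  · exfalso
    have h2 := rank_ge_two M 0 2 (by decide) hd0 hd2 h20
    rw [hrank] at h2; omega
  -- (1,1,0) : rank ≥ 2
  · exfalso
    have h2 := rank_ge_two M 0 1 (by decide) hd0 hd1 h10
    rw [hrank] at h2; omega
  -- (1,1,1) : rank ≥ 2
  · exfalso
    have h2 := rank_ge_two M 0 1 (by decide) hd0 hd1 h10
    rw [hrank] at h2; omega
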